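/- There is no bounded continuous function w : ℝ² → ℝ² for which there exists a constant c > 0 such that |⟨x − y, w(x) − w(y)⟩| > c·‖w(x) − w(y)‖ for every pair of points x, y ∈ ℝ² with ‖x − y‖ > 1. -/

import Mathlib

open scoped RealInnerProductSpace

noncomputable section
namespace NoUniv
set_option maxHeartbeats 1000000

abbrev E2 := EuclideanSpace ℝ (Fin 2)

def pvec (u : E2) : E2 := (WithLp.equiv 2 (Fin 2 → ℝ)).symm ![-(u 1), u 0]

variable (w : E2 → E2) (c : ℝ)

/-- one staircase step -/
lemma step (hc : 0 < c)
    (H : ∀ x y : E2, 1 < ‖x - y‖ → c * ‖w x - w y‖ < ⟪x - y, w x - w y⟫)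
    (u : E2) (hu : ‖u‖ = 1) (x y : E2)
    (h1 : 3/2 ≤ ⟪u, y - x⟫) (h2 : ⟪u, y - x⟫ ≤ 5/2)
    (h3 : ‖(y - x) - ⟪u, y - x⟫ • u‖ ≤ c/2) :
    ‖w y - w x‖ ≤ (5/c) * (⟪u, w y⟫ - ⟪u, w x⟫) := by
  set a : ℝ := ⟪u, y - x⟫ with ha
  set v : E2 := (y - x) - a • u with hv
  have hdist : 1 < ‖y - x‖ := by
    have := real_inner_le_norm u (y - x)
    rw [hu, one_mul] at this
    linarith
  have hmain := H y x hdist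
  set Δ : E2 := w y - w x with hΔ
  have hyx : y - x = a • u + v := by rw [hv]; abel
  have hsplit : ⟪y - x, Δ⟫ = a * ⟪u, Δ⟫ + ⟪v, Δ⟫ := by
    rw [hyx, inner_add_left, real_inner_smul_left]
  have hcs : ⟪v, Δ⟫ ≤ (c/2) * ‖Δ‖ := by
    have h := real_inner_le_norm v Δ
    nlinarith [norm_nonneg Δ, norm_nonneg v]
  have hkey : (c/2) * ‖Δ‖ < a * ⟪u, Δ⟫ := by
    rw [hsplit] at hmain; nlinarith
  have hpos : 0 < ⟪u, Δ⟫ := by nlinarith [norm_nonneg Δ]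
  have h5 : (c/2) * ‖Δ‖ < (5/2) * ⟪u, Δ⟫ := by nlinarith
  have : ‖Δ‖ ≤ (5/c) * ⟪u, Δ⟫ := by
    rw [div_mul_eq_mul_div, le_div_iff₀ hc]; nlinarith
  calc ‖w y - w x‖ = ‖Δ‖ := rfl
    _ ≤ (5/c) * ⟪u, Δ⟫ := this
    _ = (5/c) * (⟪u, w y⟫ - ⟪u, w x⟫) := by rw [hΔ, inner_sub_right]

lemma chain (hc : 0 < c)
    (H : ∀ x y : E2, 1 < ‖x - y‖ → c * ‖w x - w y‖ < ⟪x - y, w x - w y⟫)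
    (u : E2) (hu : ‖u‖ = 1) :
    ∀ n : ℕ, 1 ≤ n → ∀ x y : E2,
      (3/2) * n ≤ ⟪u, y - x⟫ → ⟪u, y - x⟫ ≤ (5/2) * n →
      ‖(y - x) - ⟪u, y - x⟫ • u‖ ≤ n * (c/2) →
      ‖w y - w x‖ ≤ (5/c) * (⟪u, w y⟫ - ⟪u, w x⟫) := by
  intro n hn
  induction n, hn using Nat.le_induction with
  | base =>
    intro x y h1 h2 h3
    exact step w c hc H u hu x y (by push_cast at h1 ⊢; linarith)
      (by push_cast at h2 ⊢; linarith) (by push_cast at h3 ⊢; linarith)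
  | succ n hn ih =>
    intro x y h1 h2 h3
    set a : ℝ := ⟪u, y - x⟫ with ha
    set v : E2 := (y - x) - a • u with hv
    have huu : ⟪u, u⟫ = (1:ℝ) := by
      rw [real_inner_self_eq_norm_sq, hu]; norm_num
    have huv : ⟪u, v⟫ = 0 := by
      rw [hv, inner_sub_right, real_inner_smul_right, huu]; ring
    have hn1 : (0:ℝ) < (n:ℝ) + 1 := by positivity
    set m : E2 := x + (a / (n+1)) • u + ((n:ℝ)+1)⁻¹ • v with hm
    have hyx : y - x = a • u + v := by rw [hv]; abel
    -- facts about m - x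
    have hmx : m - x = (a / (n+1)) • u + ((n:ℝ)+1)⁻¹ • v := by rw [hm]; abel
    have hamx : ⟪u, m - x⟫ = a / (n+1) := by
      rw [hmx, inner_add_right, real_inner_smul_right, real_inner_smul_right, huu, huv]; ring
    have hperpmx : (m - x) - ⟪u, m - x⟫ • u = ((n:ℝ)+1)⁻¹ • v := by
      rw [hamx, hmx]; abel
    -- facts about y - m
    have hym : y - m = ((a * n) / (n+1)) • u + ((n:ℝ)/(n+1)) • v := by
      have : y - m = (y - x) - (m - x) := by abel
      rw [this, hyx, hmx]
      have e1 : a - a / ((n:ℝ)+1) = a * n / (n+1) := by field_simp; ring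
      have e2 : (1:ℝ) - ((n:ℝ)+1)⁻¹ = (n:ℝ)/(n+1) := by field_simp; ring
      rw [← e1, ← e2, sub_smul, sub_smul, one_smul]; abel
    have haym : ⟪u, y - m⟫ = (a * n) / (n+1) := by
      rw [hym, inner_add_right, real_inner_smul_right, real_inner_smul_right, huu, huv]; ring
    have hperpym : (y - m) - ⟪u, y - m⟫ • u = ((n:ℝ)/(n+1)) • v := by
      rw [haym, hym]; abel
    have hvn : ‖v‖ ≤ ((n:ℝ)+1) * (c/2) := by push_cast at h3; linarith
    have hn' : (1:ℝ) ≤ (n:ℝ) := by exact_mod_cast hn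
    push_cast at h1 h2
    -- step from x to m
    have hstep := step w c hc H u hu x m
      (by rw [hamx, le_div_iff₀ hn1]; nlinarith)
      (by rw [hamx, div_le_iff₀ hn1]; nlinarith)
      (by rw [hperpmx, norm_smul, Real.norm_eq_abs,
            abs_of_pos (show (0:ℝ) < ((n:ℝ)+1)⁻¹ by positivity), inv_mul_le_iff₀ hn1]
          nlinarith)
    have hih := ih m y
      (by rw [haym, le_div_iff₀ hn1]; nlinarith)
      (by rw [haym, div_le_iff₀ hn1]; nlinarith)
      (by rw [hperpym, norm_smul, Real.norm_eq_abs,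
            abs_of_nonneg (show (0:ℝ) ≤ (n:ℝ)/((n:ℝ)+1) by positivity), div_mul_eq_mul_div,
            div_le_iff₀ hn1]
          nlinarith)
    have htri : ‖w y - w x‖ ≤ ‖w y - w m‖ + ‖w m - w x‖ := norm_sub_le_norm_sub_add_norm_sub _ _ _
    have := hstep
    linarith
lemma reach (hc : 0 < c)
    (H : ∀ x y : E2, 1 < ‖x - y‖ → c * ‖w x - w y‖ < ⟪x - y, w x - w y⟫)
    (u : E2) (hu : ‖u‖ = 1) (x y : E2)
    (h1 : 4 ≤ ⟪u, y - x⟫)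
    (h2 : ‖(y - x) - ⟪u, y - x⟫ • u‖ ≤ (c/5) * ⟪u, y - x⟫) :
    ‖w y - w x‖ ≤ (5/c) * (⟪u, w y⟫ - ⟪u, w x⟫) := by
  set a : ℝ := ⟪u, y - x⟫ with ha
  set n : ℕ := ⌈(2/5) * a⌉₊ with hn
  have hge : (2/5) * a ≤ (n:ℝ) := Nat.le_ceil _
  have hlt : (n:ℝ) < (2/5) * a + 1 := Nat.ceil_lt_add_one (by linarith)
  have hn1 : 1 ≤ n := by
    have : (1:ℝ) ≤ (n:ℝ) := by linarith
    exact_mod_cast this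
  refine chain w c hc H u hu n hn1 x y ?_ ?_ ?_
  · linarith
  · linarith
  · calc ‖(y - x) - a • u‖ ≤ (c/5) * a := h2
      _ ≤ (n:ℝ) * (c/2) := by nlinarith

def Lam (v : E2) : ℝ := sSup (Set.range fun x => ⟪v, w x⟫)

lemma lam_bdd (K : ℝ) (hK : ∀ x, ‖w x‖ ≤ K) (v : E2) (hv : ‖v‖ = 1) :
    BddAbove (Set.range fun x => ⟪v, w x⟫) := by
  refine ⟨K, ?_⟩
  rintro r ⟨x, rfl⟩
  calc ⟪v, w x⟫ ≤ ‖v‖ * ‖w x‖ := real_inner_le_norm _ _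
    _ ≤ 1 * K := by
        rw [hv]; exact mul_le_mul_of_nonneg_left (hK x) zero_le_one
    _ = K := one_mul K

lemma lam_ge (K : ℝ) (hK : ∀ x, ‖w x‖ ≤ K) (v : E2) (hv : ‖v‖ = 1) (x : E2) :
    ⟪v, w x⟫ ≤ Lam w v :=
  le_csSup (lam_bdd w K hK v hv) ⟨x, rfl⟩

lemma lam_deep (v : E2) (ε : ℝ) (hε : 0 < ε) :
    ∃ p : E2, Lam w v - ε < ⟪v, w p⟫ := by
  obtain ⟨r, ⟨p, rfl⟩, hr⟩ :=
    exists_lt_of_lt_csSup (Set.range_nonempty _) (show Lam w v - ε < Lam w v by linarith)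
  exact ⟨p, hr⟩

lemma compare (K : ℝ) (hK : ∀ x, ‖w x‖ ≤ K) (hc : 0 < c) (hc2 : c ≤ 1/2)
    (H : ∀ x y : E2, 1 < ‖x - y‖ → c * ‖w x - w y‖ < ⟪x - y, w x - w y⟫)
    (u u' : E2) (hu : ‖u‖ = 1) (hu' : ‖u'‖ = 1) (hγ : ‖u - u'‖ ≤ c/100)
    (ε : ℝ) (hε : 0 < ε) (p q : E2)
    (hp : Lam w u - ε < ⟪u, w p⟫) (hq : Lam w u' - ε < ⟪u', w q⟫) :
    ‖w p - w q‖ ≤ 10 * ε / c := by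
  set d : E2 := p - q with hd
  set T : ℝ := (40/c) * (‖d‖ + 1) with hT
  set z : E2 := p + T • u with hz
  have hcinv : (2:ℝ) ≤ 1/c := by rw [le_div_iff₀ hc]; linarith
  have hdnn : (0:ℝ) ≤ ‖d‖ := norm_nonneg d
  have hT80 : 80 ≤ T := by
    rw [hT]
    have : (80:ℝ) ≤ (40/c) := by rw [le_div_iff₀ hc]; linarith
    nlinarith
  have huu : ⟪u, u⟫ = (1:ℝ) := by rw [real_inner_self_eq_norm_sq, hu]; norm_num
  have hu'u' : ⟪u', u'⟫ = (1:ℝ) := by rw [real_inner_self_eq_norm_sq, hu']; norm_num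
  -- inner u' u
  have hγnn : (0:ℝ) ≤ ‖u - u'‖ := norm_nonneg _
  have hinner : ⟪u', u⟫ = 1 - ‖u - u'‖^2 / 2 := by
    have hns : ‖u - u'‖^2 = ‖u‖^2 - 2 * ⟪u, u'⟫ + ‖u'‖^2 := norm_sub_sq_real u u'
    rw [hu, hu'] at hns
    rw [real_inner_comm]; nlinarith
  have hc200 : c/100 ≤ 1/200 := by linarith
  have hinner2 : (1:ℝ)/2 ≤ ⟪u', u⟫ := by rw [hinner]; nlinarith
  -- reach from p to z
  have hzp : z - p = T • u := by rw [hz]; abel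
  have hR1 : ‖w z - w p‖ ≤ (5/c) * (⟪u, w z⟫ - ⟪u, w p⟫) := by
    refine reach w c hc H u hu p z ?_ ?_
    · rw [hzp, real_inner_smul_right, huu]; linarith
    · rw [hzp, real_inner_smul_right, huu]
      simp only [mul_one]
      rw [sub_self, norm_zero]
      positivity
  -- reach from q to z
  have hzq : z - q = T • u + d := by rw [hz, hd]; abel
  have haq : ⟪u', z - q⟫ = T * ⟪u', u⟫ + ⟪u', d⟫ := by
    rw [hzq, inner_add_right, real_inner_smul_right]
  have hud : |⟪u', d⟫| ≤ ‖d‖ := by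
    have := abs_real_inner_le_norm u' d
    rw [hu', one_mul] at this; exact this
  have habs := abs_le.mp hud
  have haql : T/2 - ‖d‖ ≤ ⟪u', z - q⟫ := by
    rw [haq]; nlinarith
  have hT' : 80 * (‖d‖ + 1) ≤ T := by
    rw [hT]
    have h40 : (80:ℝ) ≤ 40/c := by rw [le_div_iff₀ hc]; linarith
    nlinarith
  have haql4 : 4 ≤ ⟪u', z - q⟫ := by linarith
  have hperpq : (z - q) - ⟪u', z - q⟫ • u' = T • (u - ⟪u', u⟫ • u') + (d - ⟪u', d⟫ • u') := by
    rw [haq, hzq]; module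
  have hnorm1 : ‖u - ⟪u', u⟫ • u'‖ ≤ 2 * ‖u - u'‖ := by
    have : u - ⟪u', u⟫ • u' = (u - u') + (1 - ⟪u', u⟫) • u' := by
      rw [sub_smul, one_smul]; abel
    rw [this]
    calc ‖(u - u') + (1 - ⟪u', u⟫) • u'‖ ≤ ‖u - u'‖ + ‖(1 - ⟪u', u⟫) • u'‖ := norm_add_le _ _
      _ = ‖u - u'‖ + |1 - ⟪u', u⟫| := by rw [norm_smul, Real.norm_eq_abs, hu', mul_one]
      _ ≤ 2 * ‖u - u'‖ := by
          rw [hinner]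
          have he : (1:ℝ) - (1 - ‖u - u'‖^2/2) = ‖u - u'‖^2/2 := by ring
          rw [he, abs_of_nonneg (by positivity)]
          nlinarith
  have hnorm2 : ‖d - ⟪u', d⟫ • u'‖ ≤ 2 * ‖d‖ := by
    calc ‖d - ⟪u', d⟫ • u'‖ ≤ ‖d‖ + ‖⟪u', d⟫ • u'‖ := norm_sub_le _ _
      _ = ‖d‖ + |⟪u', d⟫| := by rw [norm_smul, Real.norm_eq_abs, hu', mul_one]
      _ ≤ 2 * ‖d‖ := by linarith
  have hperpnorm : ‖(z - q) - ⟪u', z - q⟫ • u'‖ ≤ T * (2 * ‖u - u'‖) + 2 * ‖d‖ := by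
    rw [hperpq]
    calc ‖T • (u - ⟪u', u⟫ • u') + (d - ⟪u', d⟫ • u')‖
        ≤ ‖T • (u - ⟪u', u⟫ • u')‖ + ‖d - ⟪u', d⟫ • u'‖ := norm_add_le _ _
      _ ≤ T * (2 * ‖u - u'‖) + 2 * ‖d‖ := by
          rw [norm_smul, Real.norm_eq_abs, abs_of_pos (by linarith)]
          have := hnorm1
          gcongr
  have hR2 : ‖w z - w q‖ ≤ (5/c) * (⟪u', w z⟫ - ⟪u', w q⟫) := by
    refine reach w c hc H u' hu' q z haql4 ?_
    have key : T * (2 * ‖u - u'‖) + 2 * ‖d‖ ≤ (c/5) * (T/2 - ‖d‖) := by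
      have hTval : T * c = 40 * (‖d‖ + 1) := by
        rw [hT]; field_simp
      nlinarith [mul_le_mul_of_nonneg_left hγ (show (0:ℝ) ≤ 2*T by linarith)]
    calc ‖(z - q) - ⟪u', z - q⟫ • u'‖ ≤ T * (2 * ‖u - u'‖) + 2 * ‖d‖ := hperpnorm
      _ ≤ (c/5) * (T/2 - ‖d‖) := key
      _ ≤ (c/5) * ⟪u', z - q⟫ := by
          have h5 : (0:ℝ) < c/5 := by positivity
          exact mul_le_mul_of_nonneg_left haql (le_of_lt h5)
  -- combine
  have hz1 : ⟪u, w z⟫ ≤ Lam w u := lam_ge w K hK u hu z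
  have hz2 : ⟪u', w z⟫ ≤ Lam w u' := lam_ge w K hK u' hu' z
  have hb1 : ‖w z - w p‖ ≤ 5 * ε / c := by
    calc ‖w z - w p‖ ≤ (5/c) * (⟪u, w z⟫ - ⟪u, w p⟫) := hR1
      _ ≤ (5/c) * ε := by
          have : ⟪u, w z⟫ - ⟪u, w p⟫ ≤ ε := by linarith
          exact mul_le_mul_of_nonneg_left this (by positivity)
      _ = 5 * ε / c := by ring
  have hb2 : ‖w z - w q‖ ≤ 5 * ε / c := by
    calc ‖w z - w q‖ ≤ (5/c) * (⟪u', w z⟫ - ⟪u', w q⟫) := hR2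
      _ ≤ (5/c) * ε := by
          have : ⟪u', w z⟫ - ⟪u', w q⟫ ≤ ε := by linarith
          exact mul_le_mul_of_nonneg_left this (by positivity)
      _ = 5 * ε / c := by ring
  calc ‖w p - w q‖ ≤ ‖w p - w z‖ + ‖w z - w q‖ := norm_sub_le_norm_sub_add_norm_sub _ _ _
    _ = ‖w z - w p‖ + ‖w z - w q‖ := by rw [norm_sub_rev (w p)]
    _ ≤ 5 * ε / c + 5 * ε / c := by linarith
    _ = 10 * ε / c := by ring

lemma pvec_inner (u : E2) : ⟪u, pvec u⟫ = 0 := by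
  simp [pvec, PiLp.inner_apply, Fin.sum_univ_two]
  ring

lemma pvec_norm (u : E2) (hu : ‖u‖ = 1) : ‖pvec u‖ = 1 := by
  have h1 : ⟪pvec u, pvec u⟫ = ⟪u, u⟫ := by
    simp only [pvec, PiLp.inner_apply, Fin.sum_univ_two, WithLp.equiv_symm_apply, PiLp.toLp_apply]; simp; ring
  have h2 : ‖pvec u‖^2 = ‖u‖^2 := by
    rw [← real_inner_self_eq_norm_sq, ← real_inner_self_eq_norm_sq, h1]
  rw [hu] at h2
  nlinarith [norm_nonneg (pvec u)]

open Real in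
lemma key (K : ℝ) (hK : ∀ x, ‖w x‖ ≤ K) (hc : 0 < c) (hc2 : c ≤ 1/2)
    (H : ∀ x y : E2, 1 < ‖x - y‖ → c * ‖w x - w y‖ < ⟪x - y, w x - w y⟫) :
    False := by
  -- first show w is constant
  have hconst : ∀ x x' : E2, w x = w x' := by
    intro x x'
    by_contra hne
    have hnorm : 0 < ‖w x - w x'‖ := by
      rw [norm_pos_iff]; exact sub_ne_zero_of_ne hne
    set u : E2 := ‖w x - w x'‖⁻¹ • (w x - w x') with hudef
    have hu : ‖u‖ = 1 := by
      rw [hudef, norm_smul, Real.norm_eq_abs, abs_of_pos (by positivity)]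
      field_simp
    set P : E2 := pvec u with hP
    have hPn : ‖P‖ = 1 := pvec_norm u hu
    have hPo : ⟪u, P⟫ = 0 := pvec_inner u
    have huu : ⟪u, u⟫ = (1:ℝ) := by rw [real_inner_self_eq_norm_sq, hu]; norm_num
    have hPP : ⟪P, P⟫ = (1:ℝ) := by rw [real_inner_self_eq_norm_sq, hPn]; norm_num
    set m : ℕ := ⌈(400:ℝ)/c⌉₊ with hm
    have hm400 : (400:ℝ)/c ≤ (m:ℝ) := Nat.le_ceil _
    have hmpos : (0:ℝ) < (m:ℝ) := by
      have : (0:ℝ) < 400/c := by positivity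
      linarith
    have hm1 : 1 ≤ m := by
      have : 0 < m := by exact_mod_cast hmpos
      omega
    -- directions
    set θ : ℕ → ℝ := fun j => (j:ℝ) * π / (m:ℝ) with hθ
    set udir : ℕ → E2 := fun j => Real.cos (θ j) • u + Real.sin (θ j) • P with hudir
    have hnormdir : ∀ a b : ℝ, ‖a • u + b • P‖^2 = a^2 + b^2 := by
      intro a b
      have h0 := norm_add_sq_real (a • u) (b • P)
      have e1 : ‖a • u‖ = |a| := by rw [norm_smul, Real.norm_eq_abs, hu, mul_one]
      have e2 : ‖b • P‖ = |b| := by rw [norm_smul, Real.norm_eq_abs, hPn, mul_one]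
      have e3 : ⟪a • u, b • P⟫ = (0:ℝ) := by
        rw [real_inner_smul_left, real_inner_smul_right, hPo]; ring
      rw [e1, e2, e3] at h0
      rw [h0, sq_abs, sq_abs]; ring
    have hdirunit : ∀ j, ‖udir j‖ = 1 := by
      intro j
      have h2 : ‖udir j‖^2 = 1 := by
        rw [hudir]; simp only []
        rw [hnormdir]
        have := Real.sin_sq_add_cos_sq (θ j)
        linarith
      have h3 : (‖udir j‖ - 1) * (‖udir j‖ + 1) = 0 := by linear_combination h2
      rcases mul_eq_zero.mp h3 with h | h
      · linarith
      · nlinarith [norm_nonneg (udir j)]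
    have hdir0 : udir 0 = u := by
      rw [hudir]; simp [hθ]
    have hdirm : udir m = -u := by
      rw [hudir]; simp only [hθ]
      have : (m:ℝ) * π / (m:ℝ) = π := by field_simp
      rw [this, Real.cos_pi, Real.sin_pi]
      simp
    have hgap : ∀ j : ℕ, ‖udir (j+1) - udir j‖ ≤ c/100 := by
      intro j
      have hsub : udir (j+1) - udir j
          = (Real.cos (θ (j+1)) - Real.cos (θ j)) • u
            + (Real.sin (θ (j+1)) - Real.sin (θ j)) • P := by
        rw [hudir]; simp only []
        rw [sub_smul, sub_smul]; abel
      have hθdiff : θ (j+1) - θ j = π / (m:ℝ) := by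
        rw [hθ]; push_cast; field_simp; ring
      have hsq : ‖udir (j+1) - udir j‖^2 = 2 - 2 * Real.cos (π / (m:ℝ)) := by
        rw [hsub, hnormdir]
        have hc1 := Real.sin_sq_add_cos_sq (θ (j+1))
        have hc2 := Real.sin_sq_add_cos_sq (θ j)
        have hcs : Real.cos (π / (m:ℝ)) = Real.cos (θ (j+1) - θ j) := by rw [hθdiff]
        rw [hcs, Real.cos_sub]
        nlinarith
      have hδ : π / (m:ℝ) ≤ c/100 := by
        rw [div_le_iff₀ hmpos]
        have hπ : π ≤ 4 := by linarith [Real.pi_le_four]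
        have := hm400
        have h4 : (400:ℝ)/c * (c/100) ≤ (m:ℝ) * (c/100) := by
          exact mul_le_mul_of_nonneg_right hm400 (by positivity)
        have h5 : (400:ℝ)/c * (c/100) = 4 := by field_simp; ring
        linarith
      have hδnn : 0 ≤ π / (m:ℝ) := by positivity
      have hcosb := Real.one_sub_sq_div_two_le_cos (x := π / (m:ℝ))
      have hsqb : ‖udir (j+1) - udir j‖^2 ≤ (c/100)^2 := by
        rw [hsq]
        nlinarith
      nlinarith [norm_nonneg (udir (j+1) - udir j), show (0:ℝ) < c/100 by positivity]
    -- Lam u + Lam (-u) ≤ 0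
    have hmain : Lam w u + Lam w (-u) ≤ 0 := by
      by_contra hA
      push_neg at hA
      set A : ℝ := Lam w u + Lam w (-u) with hAdef
      set C : ℝ := 2 + (m:ℝ) * (10/c) with hC
      have hCpos : 0 < C := by positivity
      set ε : ℝ := A / (2 * C) with hε
      have hεpos : 0 < ε := by positivity
      -- choose deep points
      have hdeepex : ∀ j : ℕ, ∃ p : E2, Lam w (udir j) - ε < ⟪udir j, w p⟫ :=
        fun j => lam_deep w (udir j) ε hεpos
      choose pts hpts using hdeepex
      have htel : ∀ j : ℕ, ‖w (pts 0) - w (pts j)‖ ≤ (j:ℝ) * (10 * ε / c) := by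
        intro j
        induction j with
        | zero => simp
        | succ j ih =>
          have hcomp := compare w c K hK hc hc2 H (udir j) (udir (j+1))
            (hdirunit j) (hdirunit (j+1)) (by rw [norm_sub_rev]; exact hgap j)
            ε hεpos (pts j) (pts (j+1)) (hpts j) (hpts (j+1))
          calc ‖w (pts 0) - w (pts (j+1))‖
              ≤ ‖w (pts 0) - w (pts j)‖ + ‖w (pts j) - w (pts (j+1))‖ :=
                norm_sub_le_norm_sub_add_norm_sub _ _ _
            _ ≤ (j:ℝ) * (10 * ε / c) + 10 * ε / c := by linarith
            _ = ((j:ℝ)+1) * (10 * ε / c) := by ring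
            _ = (((j+1):ℕ):ℝ) * (10 * ε / c) := by push_cast; ring
      have h0 : Lam w u < ⟪u, w (pts 0)⟫ + ε := by
        have := hpts 0; rw [hdir0] at this; linarith
      have hm' : Lam w (-u) < ⟪-u, w (pts m)⟫ + ε := by
        have := hpts m; rw [hdirm] at this; linarith
      have hinner : ⟪u, w (pts 0)⟫ + ⟪-u, w (pts m)⟫ ≤ ‖w (pts 0) - w (pts m)‖ := by
        have h1 : ⟪u, w (pts 0)⟫ + ⟪-u, w (pts m)⟫ = ⟪u, w (pts 0) - w (pts m)⟫ := by
          rw [inner_neg_left, inner_sub_right]; ring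
        rw [h1]
        calc ⟪u, w (pts 0) - w (pts m)⟫ ≤ ‖u‖ * ‖w (pts 0) - w (pts m)‖ :=
              real_inner_le_norm _ _
          _ = ‖w (pts 0) - w (pts m)‖ := by rw [hu, one_mul]
      have hfin : A < 2*ε + (m:ℝ) * (10 * ε / c) := by
        have := htel m
        linarith
      have : A < C * ε := by
        rw [hC]; ring_nf; ring_nf at hfin; linarith
      rw [hε] at this
      have : A < A / 2 := by
        calc A < C * (A / (2*C)) := this
          _ = A / 2 := by field_simp
      linarith
    -- contradiction with u direction
    have h1 : ⟪u, w x⟫ ≤ Lam w u := lam_ge w K hK u hu x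
    have h2 : ⟪-u, w x'⟫ ≤ Lam w (-u) := by
      refine lam_ge w K hK (-u) ?_ x'
      rw [norm_neg, hu]
    have h3 : ⟪u, w x - w x'⟫ = ⟪u, w x⟫ + ⟪-u, w x'⟫ := by
      rw [inner_neg_left, inner_sub_right]; ring
    have h4 : ⟪u, w x - w x'⟫ = ‖w x - w x'‖ := by
      rw [hudef, real_inner_smul_left, real_inner_self_eq_norm_mul_norm]
      field_simp
    nlinarith
  -- w constant gives contradiction
  set e1 : E2 := EuclideanSpace.single 0 (1:ℝ) with he1
  have he1n : ‖e1‖ = 1 := by rw [he1, EuclideanSpace.norm_single]; norm_num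
  have hy : ‖((2:ℝ) • e1) - 0‖ = 2 := by
    rw [sub_zero, norm_smul, Real.norm_eq_abs, he1n]; norm_num
  have := H ((2:ℝ) • e1) 0 (by rw [hy]; norm_num)
  rw [hconst ((2:ℝ) • e1) 0] at this
  simp at this

/-- sign transport along paths -/
lemma transport (hw : Continuous w) (hc : 0 < c)
    (H : ∀ x y : E2, 1 < ‖x - y‖ → c * ‖w x - w y‖ < |⟪x - y, w x - w y⟫|)
    (γ δ : ℝ → E2) (hγ : ContinuousOn γ (Set.Icc 0 1)) (hδ : ContinuousOn δ (Set.Icc 0 1))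
    (hfar : ∀ t ∈ Set.Icc (0:ℝ) 1, 1 < ‖γ t - δ t‖) :
    (0 < ⟪γ 0 - δ 0, w (γ 0) - w (δ 0)⟫ ↔ 0 < ⟪γ 1 - δ 1, w (γ 1) - w (δ 1)⟫) := by
  set f : ℝ → ℝ := fun t => ⟪γ t - δ t, w (γ t) - w (δ t)⟫ with hf
  have hfc : ContinuousOn f (Set.Icc 0 1) := by
    apply ContinuousOn.inner
    · exact hγ.sub hδ
    · exact ((hw.comp_continuousOn hγ).sub (hw.comp_continuousOn hδ))
  have hne : ∀ t ∈ Set.Icc (0:ℝ) 1, f t ≠ 0 := by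
    intro t ht h0
    have h := H (γ t) (δ t) (hfar t ht)
    rw [hf] at h0
    simp only at h0
    rw [h0, abs_zero] at h
    nlinarith [norm_nonneg (w (γ t) - w (δ t))]
  have h0m : (0:ℝ) ∈ Set.Icc (0:ℝ) 1 := by norm_num
  have h1m : (1:ℝ) ∈ Set.Icc (0:ℝ) 1 := by norm_num
  constructor
  · intro hpos
    rcases lt_or_gt_of_ne (hne 1 h1m) with hneg | hp
    · exfalso
      have hiv := intermediate_value_Icc' (by norm_num : (0:ℝ) ≤ 1) hfc
      have : (0:ℝ) ∈ Set.Icc (f 1) (f 0) := ⟨le_of_lt hneg, le_of_lt hpos⟩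
      obtain ⟨t, ht, hft⟩ := hiv this
      exact hne t ht hft
    · exact hp
  · intro hpos
    rcases lt_or_gt_of_ne (hne 0 h0m) with hneg | hp
    · exfalso
      have hiv := intermediate_value_Icc (by norm_num : (0:ℝ) ≤ 1) hfc
      have : (0:ℝ) ∈ Set.Icc (f 0) (f 1) := ⟨le_of_lt hneg, le_of_lt hpos⟩
      obtain ⟨t, ht, hft⟩ := hiv this
      exact hne t ht hft
    · exact hp

def e1 : E2 := EuclideanSpace.single 0 (1:ℝ)
def e2 : E2 := EuclideanSpace.single 1 (1:ℝ)

lemma e1_norm : ‖e1‖ = 1 := by rw [e1, EuclideanSpace.norm_single]; norm_num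
lemma e2_norm : ‖e2‖ = 1 := by rw [e2, EuclideanSpace.norm_single]; norm_num

lemma e1_ne_e2 : e1 ≠ e2 := by
  intro h
  have h0 : e1 0 = e2 0 := by rw [h]
  rw [e1, e2] at h0
  simp [EuclideanSpace.single_apply] at h0

section Sign
variable (hw : Continuous w) (hc : 0 < c)
  (H : ∀ x y : E2, 1 < ‖x - y‖ → c * ‖w x - w y‖ < |⟪x - y, w x - w y⟫|)

include hw hc H in
/-- radial move: (x,y) ~ (x, x + 2u) -/
lemma sign_radial (x y : E2) (hxy : 1 < ‖x - y‖) :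
    (0 < ⟪x - y, w x - w y⟫ ↔
      0 < ⟪x - (x + (2:ℝ) • (‖y - x‖⁻¹ • (y - x))), w x - w (x + (2:ℝ) • (‖y - x‖⁻¹ • (y - x)))⟫) := by
  have hr : 0 < ‖y - x‖ := by rw [norm_sub_rev]; linarith
  set r : ℝ := ‖y - x‖ with hrdef
  set ud : E2 := r⁻¹ • (y - x) with hud
  have hudn : ‖ud‖ = 1 := by
    rw [hud, norm_smul, Real.norm_eq_abs, abs_of_pos (by positivity)]
    field_simp
    exact hrdef.symm
  set δ : ℝ → E2 := fun t => x + ((1-t)*r + t*2) • ud with hδ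
  have hδ0 : δ 0 = y := by
    rw [hδ]; simp only []
    rw [hud]; norm_num
    rw [smul_smul]
    rw [mul_inv_cancel₀ (ne_of_gt hr), one_smul]
    abel
  have hδ1 : δ 1 = x + (2:ℝ) • ud := by rw [hδ]; norm_num
  have hcont : ContinuousOn δ (Set.Icc 0 1) := by
    apply Continuous.continuousOn
    rw [hδ]
    fun_prop
  have hfar : ∀ t ∈ Set.Icc (0:ℝ) 1, 1 < ‖(fun _ => x) t - δ t‖ := by
    intro t ht
    simp only [hδ]
    have : x - (x + ((1-t)*r + t*2) • ud) = -(((1-t)*r + t*2) • ud) := by abel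
    rw [this, norm_neg, norm_smul, Real.norm_eq_abs, hudn, mul_one]
    rcases Set.mem_Icc.mp ht with ⟨h0, h1⟩
    have hr1 : 1 < r := by rw [hrdef, norm_sub_rev]; exact hxy
    have hval : 1 < (1-t)*r + t*2 := by
      rcases le_total r 2 with h | h
      · nlinarith [mul_nonneg h0 (show (0:ℝ) ≤ 2 - r by linarith)]
      · nlinarith [mul_nonneg (show (0:ℝ) ≤ 1-t by linarith)
          (show (0:ℝ) ≤ r - 2 by linarith)]
    rw [abs_of_pos (by linarith)]
    exact hval
  have := transport w c hw hc H (fun _ => x) δ continuousOn_const hcont hfar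
  rw [hδ0, hδ1] at this
  exact this

include hw hc H in
/-- translation: (x, x+2v) ~ (0, 2v) for unit v -/
lemma sign_translate (x : E2) (v : E2) (hv : ‖v‖ = 1) :
    (0 < ⟪x - (x + (2:ℝ) • v), w x - w (x + (2:ℝ) • v)⟫ ↔
      0 < ⟪(0:E2) - (2:ℝ) • v, w 0 - w ((2:ℝ) • v)⟫) := by
  set γ : ℝ → E2 := fun t => (1-t) • x with hγ
  set δ : ℝ → E2 := fun t => (1-t) • x + (2:ℝ) • v with hδ
  have hγ0 : γ 0 = x := by rw [hγ]; norm_num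
  have hδ0 : δ 0 = x + (2:ℝ) • v := by rw [hδ]; norm_num
  have hγ1 : γ 1 = 0 := by rw [hγ]; norm_num
  have hδ1 : δ 1 = (2:ℝ) • v := by rw [hδ]; norm_num
  have hfar : ∀ t ∈ Set.Icc (0:ℝ) 1, 1 < ‖γ t - δ t‖ := by
    intro t _
    have : γ t - δ t = -((2:ℝ) • v) := by rw [hγ, hδ]; module
    rw [this, norm_neg, norm_smul, Real.norm_eq_abs, hv]; norm_num
  have := transport w c hw hc H γ δ
    (Continuous.continuousOn (by continuity))
    (Continuous.continuousOn (by continuity)) hfar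
  rw [hγ0, hδ0, hγ1, hδ1] at this
  exact this

include hw hc H in
/-- rotation: (0, 2v) ~ (0, 2v') for units v v' with v ≠ -v' -/
lemma sign_rotate (v v' : E2) (hv : ‖v‖ = 1) (hv' : ‖v'‖ = 1) (hne : v ≠ -v') :
    (0 < ⟪(0:E2) - (2:ℝ) • v, w 0 - w ((2:ℝ) • v)⟫ ↔
      0 < ⟪(0:E2) - (2:ℝ) • v', w 0 - w ((2:ℝ) • v')⟫) := by
  set q : ℝ → E2 := fun t => (1-t) • v + t • v' with hq
  have hq0 : ∀ t ∈ Set.Icc (0:ℝ) 1, q t ≠ 0 := by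
    intro t ht h0
    rcases Set.mem_Icc.mp ht with ⟨ht0, ht1⟩
    have he : (1-t) • v = -(t • v') := eq_neg_of_add_eq_zero_left h0
    have hn : ‖(1-t) • v‖ = ‖t • v'‖ := by rw [he, norm_neg]
    rw [norm_smul, norm_smul, Real.norm_eq_abs, Real.norm_eq_abs, hv, hv',
      abs_of_nonneg (by linarith), abs_of_nonneg ht0, mul_one, mul_one] at hn
    have ht2 : t = 1/2 := by linarith
    rw [ht2] at he
    norm_num at he
    apply hne
    have h2 : (2:ℝ) • ((1/2:ℝ) • v) = (2:ℝ) • (-((1/2:ℝ) • v')) := by rw [he]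
    rw [smul_smul, smul_neg, smul_smul] at h2
    norm_num at h2
    exact h2
  set δ : ℝ → E2 := fun t => (2 / ‖q t‖) • q t with hδ
  have hqc : Continuous q := by
    rw [hq]; exact ((continuous_const.sub continuous_id).smul continuous_const).add
      (continuous_id.smul continuous_const)
  have hδc : ContinuousOn δ (Set.Icc 0 1) := by
    refine ContinuousOn.smul (f := fun t => 2 / ‖q t‖) (g := q) ?_ ?_
    · exact (continuousOn_const.div (hqc.norm.continuousOn)
        (fun t ht => by simpa [norm_ne_zero_iff] using hq0 t ht))
    · exact hqc.continuousOn
  have hqv0 : q 0 = v := by rw [hq]; norm_num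
  have hqv1 : q 1 = v' := by rw [hq]; norm_num
  have hδ0 : δ 0 = (2:ℝ) • v := by rw [hδ]; simp only [hqv0, hv]; norm_num
  have hδ1 : δ 1 = (2:ℝ) • v' := by rw [hδ]; simp only [hqv1, hv']; norm_num
  have hfar : ∀ t ∈ Set.Icc (0:ℝ) 1, 1 < ‖(fun _ => (0:E2)) t - δ t‖ := by
    intro t ht
    have hqn : 0 < ‖q t‖ := by
      rw [norm_pos_iff]; exact hq0 t ht
    simp only [hδ]
    rw [zero_sub, norm_neg, norm_smul, Real.norm_eq_abs, abs_of_pos (by positivity)]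
    rw [div_mul_cancel₀ _ (ne_of_gt hqn)]
    norm_num
  have := transport w c hw hc H (fun _ => (0:E2)) δ continuousOn_const hδc hfar
  rw [hδ0, hδ1] at this
  exact this

include hw hc H in
lemma sign_const (x y : E2) (hxy : 1 < ‖x - y‖) :
    (0 < ⟪x - y, w x - w y⟫ ↔ 0 < ⟪(0:E2) - (2:ℝ) • e1, w 0 - w ((2:ℝ) • e1)⟫) := by
  have hr : 0 < ‖y - x‖ := by rw [norm_sub_rev]; linarith
  set ud : E2 := ‖y - x‖⁻¹ • (y - x) with hud
  have hudn : ‖ud‖ = 1 := by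
    rw [hud, norm_smul, Real.norm_eq_abs, abs_of_pos (by positivity)]
    field_simp
  have h1 := sign_radial w c hw hc H x y hxy
  have h2 := sign_translate w c hw hc H x ud hudn
  have h3 : (0 < ⟪(0:E2) - (2:ℝ) • ud, w 0 - w ((2:ℝ) • ud)⟫ ↔
      0 < ⟪(0:E2) - (2:ℝ) • e1, w 0 - w ((2:ℝ) • e1)⟫) := by
    by_cases hcase : ud = -e1
    · have r1 := sign_rotate w c hw hc H ud e2 hudn e2_norm
        (by rw [hcase]; intro h; exact e1_ne_e2 (neg_injective h))
      have r2 := sign_rotate w c hw hc H e2 e1 e2_norm e1_norm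
        (by intro h
            have h0 : e2 0 = (-e1) 0 := by rw [h]
            rw [e1, e2] at h0
            simp [EuclideanSpace.single_apply] at h0)
      exact r1.trans r2
    · exact sign_rotate w c hw hc H ud e1 hudn e1_norm hcase
  exact (h1.trans h2).trans h3

end Sign
end NoUniv
end

open NoUniv in
/-- There is no bounded continuous function `w : ℝ² → ℝ²` for which there exists a
constant `c > 0` such that `|⟨x − y, w x − w y⟩| > c·‖w x − w y‖` for every pair of
points `x, y ∈ ℝ²` with `‖x − y‖ > 1`. -/
theorem no_universal_continuous_vector_field :
    ¬ ∃ (w : EuclideanSpace ℝ (Fin 2) → EuclideanSpace ℝ (Fin 2)) (K c : ℝ),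
      Continuous w ∧ (∀ x, ‖w x‖ ≤ K) ∧ 0 < c ∧
      ∀ x y : EuclideanSpace ℝ (Fin 2), ‖x - y‖ > 1 →
        |⟪x - y, w x - w y⟫| > c * ‖w x - w y‖ := by
  rintro ⟨w, K, c, hw, hK, hc, H⟩
  set c' : ℝ := min c (1/2) with hc'def
  have hc' : 0 < c' := lt_min hc (by norm_num)
  have hc'2 : c' ≤ 1/2 := min_le_right _ _
  have H' : ∀ x y : E2, 1 < ‖x - y‖ → c' * ‖w x - w y‖ < |⟪x - y, w x - w y⟫| := by
    intro x y hxy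
    have h := H x y hxy
    have : c' * ‖w x - w y‖ ≤ c * ‖w x - w y‖ :=
      mul_le_mul_of_nonneg_right (min_le_left _ _) (norm_nonneg _)
    linarith
  have hgne : ∀ x y : E2, 1 < ‖x - y‖ → ⟪x - y, w x - w y⟫ ≠ 0 := by
    intro x y hxy h0
    have h := H' x y hxy
    rw [h0, abs_zero] at h
    nlinarith [norm_nonneg (w x - w y), hc']
  have hbasefar : 1 < ‖(0:E2) - (2:ℝ) • e1‖ := by
    rw [zero_sub, norm_neg, norm_smul, Real.norm_eq_abs, e1_norm]; norm_num
  by_cases hpos : 0 < ⟪(0:E2) - (2:ℝ) • e1, w 0 - w ((2:ℝ) • e1)⟫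
  · -- positive sign everywhere
    refine key w c' K hK hc' hc'2 ?_
    intro x y hxy
    have hsig := (sign_const w c' hw hc' H' x y hxy).mpr hpos
    have h := H' x y hxy
    rw [abs_of_pos hsig] at h
    exact h
  · -- negative sign everywhere; use -w
    refine key (fun z => -(w z)) c' K (fun x => by rw [norm_neg]; exact hK x) hc' hc'2 ?_
    intro x y hxy
    have hne := hgne x y hxy
    have hneg : ⟪x - y, w x - w y⟫ < 0 := by
      rcases lt_or_gt_of_ne hne with h | h
      · exact h
      · exact absurd ((sign_const w c' hw hc' H' x y hxy).mp h) hpos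
    have h := H' x y hxy
    rw [abs_of_neg hneg] at h
    have heq : -(w x) - -(w y) = -(w x - w y) := by abel
    rw [heq, norm_neg, inner_neg_right]
    linarith
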